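/- Let θ > 0 and let ψ_θ(t) = −log(1 − (1 − e^{−θ}) e^{−t})/θ for t ≥ 0 be the Frank generator. Then for every d ≥ 1 and every t > 0, the d-th derivative of ψ_θ satisfies (−1)^d ψ_θ^{(d)}(t) = (1/θ) · Li_{−(d−1)}((1 − e^{−θ}) e^{−t}), where Li_{−s}(z) = ∑_{k=1}^∞ k^s z^k for s ≥ 0 (with the convention k^0 = 1, so Li_0(z) = z/(1−z)), the series converging since 0 < (1 − e^{−θ}) e^{−t} < 1. -/

import Mathlib

open Real

private lemma summ_aux (m : ℕ) {x : ℝ} (hx0 : 0 ≤ x) (hx1 : x < 1) :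
    Summable (fun k : ℕ => ((k : ℝ) + 1) ^ m * x ^ (k + 1)) := by
  have h : Summable (fun n : ℕ => (n : ℝ) ^ m * x ^ n) :=
    summable_pow_mul_geometric_of_norm_lt_one m
      (by rwa [Real.norm_eq_abs, abs_of_nonneg hx0])
  have h2 := h.comp_injective (add_left_injective 1)
  convert h2 using 2 with k
  · rfl
  · simp [Function.comp]

private lemma term_deriv (a : ℝ) (m k : ℕ) (y : ℝ) :
    HasDerivAt (fun s => ((k : ℝ) + 1) ^ m * (a * Real.exp (-s)) ^ (k + 1))
      (-(((k : ℝ) + 1) ^ (m + 1) * (a * Real.exp (-y)) ^ (k + 1))) y := by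
  have h1 : HasDerivAt (fun s : ℝ => a * Real.exp (-s)) (-(a * Real.exp (-y))) y := by
    have := ((Real.hasDerivAt_exp (-y)).comp y (hasDerivAt_neg y)).const_mul a
    simpa [mul_comm] using this
  have h3 := (h1.pow (k + 1)).const_mul (((k : ℝ) + 1) ^ m)
  convert h3 using 1
  rotate_left 3
  push_cast
  simp [pow_succ]
  ring
  all_goals rfl

private lemma tsum_hasDerivAt {a : ℝ} (ha0 : 0 < a) (ha1 : a < 1) (m : ℕ) {y : ℝ} (hy : 0 < y) :
    HasDerivAt (fun s => ∑' k : ℕ, ((k : ℝ) + 1) ^ m * (a * Real.exp (-s)) ^ (k + 1))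
      (-∑' k : ℕ, ((k : ℝ) + 1) ^ (m + 1) * (a * Real.exp (-y)) ^ (k + 1)) y := by
  have hbound : ∀ (k : ℕ) (s : ℝ), s ∈ Set.Ioi (0 : ℝ) →
      ‖-(((k : ℝ) + 1) ^ (m + 1) * (a * Real.exp (-s)) ^ (k + 1))‖
        ≤ ((k : ℝ) + 1) ^ (m + 1) * a ^ (k + 1) := by
    intro k s hs
    rw [norm_neg, Real.norm_eq_abs, abs_of_nonneg (by positivity)]
    have hle : a * Real.exp (-s) ≤ a := by
      nlinarith [Real.exp_le_one_iff.2 (by linarith [Set.mem_Ioi.1 hs] : (-s : ℝ) ≤ 0)]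
    exact mul_le_mul_of_nonneg_left
      (pow_le_pow_left₀ (by positivity) hle (k + 1)) (by positivity)
  have hxy : a * Real.exp (-y) < 1 :=
    lt_of_le_of_lt (by nlinarith [Real.exp_le_one_iff.2 (by linarith : (-y : ℝ) ≤ 0)]) ha1
  have key := hasDerivAt_tsum_of_isPreconnected
    (summ_aux (m + 1) ha0.le ha1) isOpen_Ioi isPreconnected_Ioi
    (fun k s _ => term_deriv a m k s) hbound (Set.mem_Ioi.2 hy)
    (summ_aux m (by positivity) hxy) (Set.mem_Ioi.2 hy)
  rw [tsum_neg] at key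
  exact key


/-- Derivatives of the Frank generator `ψ_θ(t) = −log(1−(1−e^{−θ})e^{−t})/θ`:
`(−1)^d ψ_θ^{(d)}(t) = (1/θ) Li_{−(d−1)}((1−e^{−θ})e^{−t})`, with
`Li_{−s}(z) = ∑_{k=1}^∞ k^s z^k` convergent. -/
theorem stmt_12 (θ : ℝ) (hθ : 0 < θ) (d : ℕ) (hd : 1 ≤ d) (t : ℝ) (ht : 0 < t) :
    Summable (fun k : ℕ =>
      ((k : ℝ) + 1) ^ (d - 1) * ((1 - Real.exp (-θ)) * Real.exp (-t)) ^ (k + 1)) ∧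
    (-1 : ℝ) ^ d *
        iteratedDeriv d
          (fun s => -Real.log (1 - (1 - Real.exp (-θ)) * Real.exp (-s)) / θ) t
      = (1/θ) *
          ∑' k : ℕ,
            ((k : ℝ) + 1) ^ (d - 1) *
              ((1 - Real.exp (-θ)) * Real.exp (-t)) ^ (k + 1) := by
  set a : ℝ := 1 - Real.exp (-θ) with ha
  have ha0 : 0 < a := by
    have := Real.exp_lt_one_iff.2 (by linarith : (-θ : ℝ) < 0)
    simp [ha]; linarith
  have ha1 : a < 1 := by
    have := Real.exp_pos (-θ)
    simp [ha]; linarith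
  set ψ : ℝ → ℝ := fun s => -Real.log (1 - a * Real.exp (-s)) / θ with hψ
  have hxlt : ∀ {y : ℝ}, 0 < y → a * Real.exp (-y) < 1 := by
    intro y hy
    have h1 : Real.exp (-y) ≤ 1 := Real.exp_le_one_iff.2 (by linarith)
    have h2 : (0:ℝ) < Real.exp (-y) := Real.exp_pos _
    nlinarith
  have hxpos : ∀ {y : ℝ}, 0 < a * Real.exp (-y) := fun {y} => by positivity
  have claim : ∀ m : ℕ, ∀ y : ℝ, 0 < y →
      iteratedDeriv (m + 1) ψ y
        = (-1) ^ (m + 1) * (1 / θ) *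
            ∑' k : ℕ, ((k : ℝ) + 1) ^ m * (a * Real.exp (-y)) ^ (k + 1) := by
    intro m
    induction m with
    | zero =>
      intro y hy
      rw [iteratedDeriv_one]
      have h1 : HasDerivAt (fun s : ℝ => 1 - a * Real.exp (-s)) (a * Real.exp (-y)) y := by
        have := (((Real.hasDerivAt_exp (-y)).comp y (hasDerivAt_neg y)).const_mul a).const_sub 1
        simpa [mul_comm] using this
      have hne : 1 - a * Real.exp (-y) ≠ 0 := by
        have := hxlt hy; linarith
      have h2 : HasDerivAt ψ (-(a * Real.exp (-y) / (1 - a * Real.exp (-y))) / θ) y := by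
        have := ((h1.log hne).neg.div_const θ)
        simpa [hψ] using this
      rw [h2.deriv]
      have hts : ∑' k : ℕ, ((k : ℝ) + 1) ^ 0 * (a * Real.exp (-y)) ^ (k + 1)
          = (a * Real.exp (-y)) * (1 - a * Real.exp (-y))⁻¹ := by
        simp only [pow_zero, one_mul, pow_succ']
        rw [tsum_mul_left, tsum_geometric_of_lt_one hxpos.le (hxlt hy)]
      rw [hts]
      field_simp
      ring
    | succ m ih =>
      intro y hy
      rw [iteratedDeriv_succ]
      have heq : iteratedDeriv (m + 1) ψ =ᶠ[nhds y]
          fun s => (-1) ^ (m + 1) * (1 / θ) *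
            ∑' k : ℕ, ((k : ℝ) + 1) ^ m * (a * Real.exp (-s)) ^ (k + 1) := by
        filter_upwards [isOpen_Ioi.mem_nhds (Set.mem_Ioi.2 hy)] with s hs
        exact ih s hs
      rw [heq.deriv_eq]
      rw [((tsum_hasDerivAt ha0 ha1 m hy).const_mul ((-1 : ℝ) ^ (m + 1) * (1 / θ))).deriv]
      ring
  obtain ⟨m, rfl⟩ : ∃ m, d = m + 1 := ⟨d - 1, (Nat.succ_pred_eq_of_pos hd).symm⟩
  have hm : m + 1 - 1 = m := rfl
  rw [hm]
  refine ⟨summ_aux m hxpos.le (hxlt ht), ?_⟩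
  rw [claim m t ht, ← mul_assoc, ← mul_assoc, ← pow_add]
  rw [show ((-1 : ℝ)) ^ (m + 1 + (m + 1)) = 1 from Even.neg_one_pow ⟨m + 1, rfl⟩, one_mul]
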